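/- Let G be a multigraph whose vertex set is partitioned as V₁ ⊔ S ⊔ V₂, with S = {u₁,u₂,u₃}, |V₁| odd, and no edges between V₁ and V₂. Then every perfect matching of G is of exactly one of four types: (Type 0) all three vertices of S matched to vertices of V₁, and the rest of the matching is a perfect matching of G[V₂]; (Type i, for i = 1,2,3) u_i matched to a vertex of V₁, and the remaining matching restricted to V₂ ∪ (S∖{u_i}) is a perfect matching of G[V₂ ∪ (S∖{u_i})]. Consequently, for any vertex colouring vc, its weight decomposes as w(vc) = Σ_{i=0}^{3} W_i(vc)·W_i'(vc), where W_i and W_i' are the weights of the restricted colourings on the two sides. -/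

import Mathlib

open scoped Classical

/-- An edge-coloured edge-weighted multigraph (no self-loops) on vertex set `V`.
Each edge `e` has two endpoints `fst e`, `snd e`, a colour on each of its two
half-edges (`cf e` at `fst e`, `cs e` at `snd e`) and a complex weight `w e`. -/
structure EMG (V : Type) [Fintype V] [DecidableEq V] where
  E : Type
  [fintypeE : Fintype E]
  fst : E → V
  snd : E → V
  noLoop : ∀ e, fst e ≠ snd e
  cf : E → ℕ
  cs : E → ℕ
  w : E → ℂ

namespace EMG

attribute [instance] EMG.fintypeE

variable {V : Type} [Fintype V] [DecidableEq V] (G : EMG V)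

/-- `e` is incident to vertex `x`. -/
def inc (e : G.E) (x : V) : Prop := G.fst e = x ∨ G.snd e = x

/-- `M` is a perfect matching of the induced subgraph on `S`: all edges of `M`
lie inside `S` and every vertex of `S` is covered exactly once. -/
def IsPMOn (S : Finset V) (M : Finset G.E) : Prop :=
  (∀ e ∈ M, G.fst e ∈ S ∧ G.snd e ∈ S) ∧ ∀ x ∈ S, ∃! e, e ∈ M ∧ G.inc e x

/-- `M` is a perfect matching of `G`. -/
def IsPM (M : Finset G.E) : Prop := G.IsPMOn Finset.univ M

/-- `M` induces the vertex colouring `vc`: every edge of `M` survives the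
filtering by `vc` (half-edge colours agree with the endpoint colours). -/
def Induces (M : Finset G.E) (vc : V → ℕ) : Prop :=
  ∀ e ∈ M, G.cf e = vc (G.fst e) ∧ G.cs e = vc (G.snd e)

/-- The weight of the vertex colouring `vc` on the induced subgraph on `S`:
the sum over perfect matchings of the filtered subgraph of the products of
edge weights. -/
noncomputable def wcolOn (S : Finset V) (vc : V → ℕ) : ℂ :=
  ∑ M ∈ Finset.univ.filter (fun M => G.IsPMOn S M ∧ G.Induces M vc),
    ∏ e ∈ M, G.w e

/-- The weight of the vertex colouring `vc` in `G`. -/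
noncomputable def wcol (vc : V → ℕ) : ℂ := G.wcolOn Finset.univ vc

/-- `vc` is feasible: the subgraph filtered by `vc` has a perfect matching. -/
def Feasible (vc : V → ℕ) : Prop := ∃ M, G.IsPM M ∧ G.Induces M vc

/-- `G` is a GHZ graph: all feasible monochromatic vertex colourings have
weight `1` and all non-monochromatic vertex colourings have weight `0`. -/
def IsGHZ : Prop :=
  (∀ i : ℕ, G.Feasible (fun _ => i) → G.wcol (fun _ => i) = 1) ∧
  (∀ vc : V → ℕ, (¬ ∃ i : ℕ, ∀ x, vc x = i) → G.wcol vc = 0)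

/-- `G` is a g-GHZ graph: all feasible monochromatic vertex colourings have
non-zero weight and all non-monochromatic vertex colourings have weight `0`. -/
def IsgGHZ : Prop :=
  (∀ i : ℕ, G.Feasible (fun _ => i) → G.wcol (fun _ => i) ≠ 0) ∧
  (∀ vc : V → ℕ, (¬ ∃ i : ℕ, ∀ x, vc x = i) → G.wcol vc = 0)

/-- The dimension: the number of feasible monochromatic vertex colourings. -/
noncomputable def dimension : ℕ := Set.ncard {i : ℕ | G.Feasible (fun _ => i)}

/-- The skeleton of `G`: its underlying simple graph. -/
def skeleton : SimpleGraph V where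
  Adj a b := a ≠ b ∧ ∃ e : G.E, (G.fst e = a ∧ G.snd e = b) ∨ (G.fst e = b ∧ G.snd e = a)
  symm := by
    constructor
    intro a b h
    refine ⟨h.1.symm, ?_⟩
    obtain ⟨e, he⟩ := h.2
    exact ⟨e, he.symm⟩
  loopless := by constructor; intro a h; exact h.1 rfl

/-- Replace the weight function of `G`. -/
def reweight (w' : G.E → ℂ) : EMG V := { G with w := w' }

/-- Delete the edges in `D` from `G`. -/
noncomputable def deleteEdges (D : Finset G.E) : EMG V where
  E := {e : G.E // e ∉ D}
  fst e := G.fst e.1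
  snd e := G.snd e.1
  noLoop e := G.noLoop e.1
  cf e := G.cf e.1
  cs e := G.cs e.1
  w e := G.w e.1

/-- `M` is a monochromatic perfect matching of colour `i` (as a set of coloured
edges: all half-edges of `M` carry colour `i`). -/
def MonoPM (M : Finset G.E) (i : ℕ) : Prop :=
  ∀ e ∈ M, G.cf e = i ∧ G.cs e = i

/-- Both endpoints of `e` lie in `S`. -/
def bothIn (S : Finset V) (e : G.E) : Prop := G.fst e ∈ S ∧ G.snd e ∈ S

/-- `e` joins a vertex of `S` to the vertex `x`. -/
def connectsTo (S : Finset V) (x : V) (e : G.E) : Prop :=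
  (G.fst e ∈ S ∧ G.snd e = x) ∨ (G.snd e ∈ S ∧ G.fst e = x)

end EMG

/-- The matching index of a simple graph `H`: the maximum dimension over all
GHZ edge-coloured edge-weighted multigraphs whose skeleton is `H`. -/
noncomputable def matchingIndex {V : Type} [Fintype V] [DecidableEq V]
    (H : SimpleGraph V) : ℕ :=
  sSup {d : ℕ | ∃ G : EMG V, G.skeleton = H ∧ G.IsGHZ ∧ G.dimension = d}

namespace EMG
variable {V : Type} [Fintype V] [DecidableEq V] (G : EMG V)

lemma factor_lemma (A B : Finset V) (hAB : Disjoint A B)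
    (hU : ∀ x : V, x ∈ A ∨ x ∈ B) (g : G.E → Prop)
    (hg : ∀ e, G.bothIn B e → g e) (vc : V → ℕ) :
    (∑ M ∈ Finset.univ.filter (fun M : Finset G.E =>
        G.IsPM M ∧ G.Induces M vc ∧ (∀ e ∈ M, G.bothIn A e ∨ G.bothIn B e)
          ∧ ∀ e ∈ M, g e), ∏ e ∈ M, G.w e)
    = (∑ M ∈ Finset.univ.filter (fun M : Finset G.E =>
        G.IsPMOn A M ∧ G.Induces M vc ∧ ∀ e ∈ M, g e), ∏ e ∈ M, G.w e)
      * (∑ M ∈ Finset.univ.filter (fun M : Finset G.E =>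
        G.IsPMOn B M ∧ G.Induces M vc), ∏ e ∈ M, G.w e) := by
  classical
  have hnotAB : ∀ e : G.E, G.bothIn A e → G.bothIn B e → False := by
    intro e h1 h2
    exact (Finset.disjoint_left.1 hAB h1.1) h2.1
  rw [Finset.sum_mul_sum]
  rw [← Finset.sum_product']
  refine Finset.sum_nbij' (fun M => (M.filter (fun e => G.bothIn A e),
      M.filter (fun e => ¬ G.bothIn A e))) (fun p => p.1 ∪ p.2) ?_ ?_ ?_ ?_ ?_
  · -- forward membership
    intro M hM
    simp only [Finset.mem_filter, Finset.mem_univ, true_and] at hM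
    obtain ⟨hPM, hInd, hsplit, hG⟩ := hM
    simp only [Finset.mem_product, Finset.mem_filter, Finset.mem_univ, true_and]
    have hBside : ∀ e ∈ M, ¬ G.bothIn A e → G.bothIn B e := by
      intro e he hn
      rcases hsplit e he with h | h
      · exact absurd h hn
      · exact h
    refine ⟨⟨⟨?_, ?_⟩, ?_, ?_⟩, ⟨?_, ?_⟩, ?_⟩
    · intro e he
      rw [Finset.mem_filter] at he
      exact he.2
    · intro x hx
      obtain ⟨e, ⟨heM, heinc⟩, huniq⟩ := hPM.2 x (Finset.mem_univ x)
      have heA : G.bothIn A e := by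
        by_contra hn
        have hB := hBside e heM hn
        rcases heinc with h | h
        · exact (Finset.disjoint_left.1 hAB hx) (h ▸ hB.1)
        · exact (Finset.disjoint_left.1 hAB hx) (h ▸ hB.2)
      refine ⟨e, ⟨Finset.mem_filter.2 ⟨heM, heA⟩, heinc⟩, ?_⟩
      intro e' ⟨he', hinc'⟩
      exact huniq e' ⟨(Finset.mem_filter.1 he').1, hinc'⟩
    · intro e he; exact hInd e (Finset.mem_filter.1 he).1
    · intro e he; exact hG e he.1
    · intro e he
      rw [Finset.mem_filter] at he
      exact hBside e he.1 he.2
    · intro x hx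
      obtain ⟨e, ⟨heM, heinc⟩, huniq⟩ := hPM.2 x (Finset.mem_univ x)
      have heB : ¬ G.bothIn A e := by
        intro hA
        rcases heinc with h | h
        · exact (Finset.disjoint_left.1 hAB (h ▸ hA.1)) hx
        · exact (Finset.disjoint_left.1 hAB (h ▸ hA.2)) hx
      refine ⟨e, ⟨Finset.mem_filter.2 ⟨heM, heB⟩, heinc⟩, ?_⟩
      intro e' ⟨he', hinc'⟩
      exact huniq e' ⟨(Finset.mem_filter.1 he').1, hinc'⟩
    · intro e he; exact hInd e (Finset.mem_filter.1 he).1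
  · -- backward membership
    rintro ⟨M₁, M₂⟩ hp
    simp only [Finset.mem_product, Finset.mem_filter, Finset.mem_univ, true_and] at hp
    obtain ⟨⟨hPM1, hInd1, hG1⟩, hPM2, hInd2⟩ := hp
    simp only [Finset.mem_filter, Finset.mem_univ, true_and]
    have hmem : ∀ e ∈ M₁ ∪ M₂, G.bothIn A e ∨ G.bothIn B e := by
      intro e he
      rcases Finset.mem_union.1 he with h | h
      · exact Or.inl (hPM1.1 e h)
      · exact Or.inr (hPM2.1 e h)
    refine ⟨⟨?_, ?_⟩, ?_, hmem, ?_⟩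
    · intro e _; exact ⟨Finset.mem_univ _, Finset.mem_univ _⟩
    · intro x _
      rcases hU x with hx | hx
      · obtain ⟨e, ⟨heM, heinc⟩, huniq⟩ := hPM1.2 x hx
        refine ⟨e, ⟨Finset.mem_union_left _ heM, heinc⟩, ?_⟩
        rintro e' ⟨he', hinc'⟩
        rcases Finset.mem_union.1 he' with h | h
        · exact huniq e' ⟨h, hinc'⟩
        · exfalso
          have := hPM2.1 e' h
          rcases hinc' with h2 | h2
          · exact (Finset.disjoint_left.1 hAB hx) (h2 ▸ this.1)
          · exact (Finset.disjoint_left.1 hAB hx) (h2 ▸ this.2)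
      · obtain ⟨e, ⟨heM, heinc⟩, huniq⟩ := hPM2.2 x hx
        refine ⟨e, ⟨Finset.mem_union_right _ heM, heinc⟩, ?_⟩
        rintro e' ⟨he', hinc'⟩
        rcases Finset.mem_union.1 he' with h | h
        · exfalso
          have := hPM1.1 e' h
          rcases hinc' with h2 | h2
          · exact (Finset.disjoint_left.1 hAB (h2 ▸ this.1)) hx
          · exact (Finset.disjoint_left.1 hAB (h2 ▸ this.2)) hx
        · exact huniq e' ⟨h, hinc'⟩
    · intro e he
      rcases Finset.mem_union.1 he with h | h
      · exact hInd1 e h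
      · exact hInd2 e h
    · intro e he
      rcases Finset.mem_union.1 he with h | h
      · exact hG1 e h
      · exact hg e (hPM2.1 e h)
  · -- left inverse
    intro M _
    exact Finset.filter_union_filter_not_eq _ M
  · -- right inverse
    rintro ⟨M₁, M₂⟩ hp
    simp only [Finset.mem_product, Finset.mem_filter, Finset.mem_univ, true_and] at hp
    obtain ⟨⟨hPM1, _, _⟩, hPM2, _⟩ := hp
    have h1 : ∀ e ∈ M₁, G.bothIn A e := hPM1.1
    have h2 : ∀ e ∈ M₂, ¬ G.bothIn A e := by
      intro e he hA
      exact (Finset.disjoint_left.1 hAB hA.1) (hPM2.1 e he).1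
    simp only [Prod.mk.injEq]
    constructor <;> ext e <;> simp only [Finset.mem_filter, Finset.mem_union]
    · constructor
      · rintro ⟨h | h, hA⟩
        · exact h
        · exact absurd hA (h2 e h)
      · intro h; exact ⟨Or.inl h, h1 e h⟩
    · constructor
      · rintro ⟨h | h, hA⟩
        · exact absurd (h1 e h) hA
        · exact h
      · intro h; exact ⟨Or.inr h, h2 e h⟩
  · -- weights
    intro M _
    exact (Finset.prod_filter_mul_prod_filter_not M _ _).symm

/-- If `z ∉ V₁` is matched into `V₁` by `M`, then for any edge of `M` covering
`z`, the other endpoint lies in `V₁`. -/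
lemma endpt (V₁ : Finset V) (M : Finset G.E) (hM : G.IsPM M) (z : V)
    (hz : ∃ e ∈ M, G.connectsTo V₁ z e) (hzV₁ : z ∉ V₁) :
    ∀ e ∈ M, ∀ y : V,
      ((G.fst e = z ∧ G.snd e = y) ∨ (G.fst e = y ∧ G.snd e = z)) → y ∈ V₁ := by
  intro e he y hxy
  obtain ⟨e', he'M, hconn⟩ := hz
  have hinc : G.inc e z := by
    rcases hxy with ⟨h, _⟩ | ⟨_, h⟩
    · exact Or.inl h
    · exact Or.inr h
  have hinc' : G.inc e' z := by
    rcases hconn with ⟨_, h⟩ | ⟨_, h⟩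
    · exact Or.inr h
    · exact Or.inl h
  obtain ⟨e₀, _, huniq⟩ := hM.2 z (Finset.mem_univ z)
  have hee : e = e' := (huniq e ⟨he, hinc⟩).trans (huniq e' ⟨he'M, hinc'⟩).symm
  subst hee
  have hyz : y ≠ z := by
    rcases hxy with ⟨h1, h2⟩ | ⟨h1, h2⟩
    · intro h; exact G.noLoop e (h1.trans (h ▸ h2).symm)
    · intro h; exact G.noLoop e ((h ▸ h1).trans h2.symm)
  rcases hxy with ⟨h1, h2⟩ | ⟨h1, h2⟩ <;> rcases hconn with ⟨g1, g2⟩ | ⟨g1, g2⟩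
  · exact absurd (h2.symm.trans g2) hyz
  · exact h2 ▸ g1
  · exact h1 ▸ g1
  · exact absurd (h1.symm.trans g2) hyz

/-- Exclusion: an edge connecting `V₁` to `y` cannot lie inside `A` nor inside
`B` if `y ∉ A` and `V₁` is disjoint from `B`. -/
lemma excl (V₁ A B : Finset V) (y : V) (hyA : y ∉ A) (hB : ∀ v ∈ V₁, v ∉ B) :
    ∀ e : G.E, G.connectsTo V₁ y e → (G.bothIn A e ∨ G.bothIn B e) → False := by
  intro e hconn hsplit
  rcases hconn with ⟨h1, h2⟩ | ⟨h1, h2⟩ <;> rcases hsplit with ⟨g1, g2⟩ | ⟨g1, g2⟩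
  · exact hyA (h2 ▸ g2)
  · exact hB _ h1 g1
  · exact hyA (h2 ▸ g1)
  · exact hB _ h1 g2

/-- Parity: out of the three cut vertices, either all three or exactly one is
matched into `V₁`. -/
lemma parity (u₁ u₂ u₃ : V) (h12 : u₁ ≠ u₂) (h13 : u₁ ≠ u₃) (h23 : u₂ ≠ u₃)
    (V₁ V₂ : Finset V) (hd12 : Disjoint V₁ V₂)
    (hu1 : u₁ ∉ V₁ ∧ u₁ ∉ V₂) (hu2 : u₂ ∉ V₁ ∧ u₂ ∉ V₂) (hu3 : u₃ ∉ V₁ ∧ u₃ ∉ V₂)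
    (hcover : ∀ x : V, x ∈ V₁ ∨ x ∈ V₂ ∨ x = u₁ ∨ x = u₂ ∨ x = u₃)
    (hsep : ∀ e : G.E,
      ¬ (G.fst e ∈ V₁ ∧ G.snd e ∈ V₂) ∧ ¬ (G.fst e ∈ V₂ ∧ G.snd e ∈ V₁))
    (hodd : Odd V₁.card) (M : Finset G.E) (hM : G.IsPM M) :
    ((∃ e ∈ M, G.connectsTo V₁ u₁ e) ∧ (∃ e ∈ M, G.connectsTo V₁ u₂ e) ∧
        (∃ e ∈ M, G.connectsTo V₁ u₃ e)) ∨
    ((∃ e ∈ M, G.connectsTo V₁ u₁ e) ∧ ¬(∃ e ∈ M, G.connectsTo V₁ u₂ e) ∧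
        ¬(∃ e ∈ M, G.connectsTo V₁ u₃ e)) ∨
    (¬(∃ e ∈ M, G.connectsTo V₁ u₁ e) ∧ (∃ e ∈ M, G.connectsTo V₁ u₂ e) ∧
        ¬(∃ e ∈ M, G.connectsTo V₁ u₃ e)) ∨
    (¬(∃ e ∈ M, G.connectsTo V₁ u₁ e) ∧ ¬(∃ e ∈ M, G.connectsTo V₁ u₂ e) ∧
        (∃ e ∈ M, G.connectsTo V₁ u₃ e)) := by
  classical
  -- the covering edge of each vertex
  have hex0 : ∀ x : V, ∃ e, e ∈ M ∧ G.inc e x := fun x => (hM.2 x (Finset.mem_univ x)).exists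
  choose ex hexM hexinc using hex0
  have hun : ∀ (x : V) (e : G.E), e ∈ M → G.inc e x → e = ex x := by
    intro x e he hi
    obtain ⟨e₀, _, huniq⟩ := hM.2 x (Finset.mem_univ x)
    exact (huniq e ⟨he, hi⟩).trans (huniq (ex x) ⟨hexM x, hexinc x⟩).symm
  set other : V → V := fun x =>
    if G.fst (ex x) = x then G.snd (ex x) else G.fst (ex x) with hother
  have hpair : ∀ x : V, (G.fst (ex x) = x ∧ G.snd (ex x) = other x) ∨
      (G.snd (ex x) = x ∧ G.fst (ex x) = other x) := by
    intro x
    by_cases h : G.fst (ex x) = x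
    · left; exact ⟨h, by simp [hother, h]⟩
    · right
      have : G.snd (ex x) = x := (hexinc x).resolve_left h
      exact ⟨this, by simp [hother, h]⟩
  have hne : ∀ x : V, other x ≠ x := by
    intro x h
    rcases hpair x with ⟨h1, h2⟩ | ⟨h1, h2⟩
    · exact G.noLoop (ex x) (h1.trans (h ▸ h2).symm)
    · exact G.noLoop (ex x) ((h ▸ h2).trans h1.symm)
  have hoinc : ∀ x : V, G.inc (ex x) (other x) := by
    intro x
    rcases hpair x with ⟨_, h2⟩ | ⟨_, h2⟩
    · exact Or.inr h2
    · exact Or.inl h2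
  have hoeq : ∀ x : V, ex (other x) = ex x := by
    intro x
    exact (hun (other x) (ex x) (hexM x) (hoinc x)).symm
  have hodef : ∀ z : V, other z =
      if G.fst (ex z) = z then G.snd (ex z) else G.fst (ex z) := fun _ => rfl
  have hoo : ∀ x : V, other (other x) = x := by
    intro x
    rw [hodef (other x), hoeq x]
    rcases hpair x with ⟨h1, h2⟩ | ⟨h1, h2⟩
    · rw [if_neg (by rw [h1]; exact (hne x).symm), h1]
    · rw [if_pos h2, h1]
  have hnotV₂ : ∀ x ∈ V₁, other x ∉ V₂ := by
    intro x hx ho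
    rcases hpair x with ⟨h1, h2⟩ | ⟨h1, h2⟩
    · exact (hsep (ex x)).1 ⟨by rw [h1]; exact hx, by rw [h2]; exact ho⟩
    · exact (hsep (ex x)).2 ⟨by rw [h2]; exact ho, by rw [h1]; exact hx⟩
  -- the sets of V₁-vertices matched inside/outside V₁
  set t : Finset V := V₁.filter (fun x => ¬ other x ∈ V₁) with ht
  set s : Finset V := V₁.filter (fun x => other x ∈ V₁) with hs
  have hs_closed : ∀ x ∈ s, other x ∈ s := by
    intro x hx
    rw [hs, Finset.mem_filter] at hx ⊢
    exact ⟨hx.2, (hoo x).symm ▸ hx.1⟩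
  have hseven : Even s.card := by
    have hsum : (∑ _x ∈ s, (1 : ZMod 2)) = 0 := by
      refine Finset.sum_involution (fun a _ => other a) (fun a _ => ?_)
        (fun a _ h => hne a) (fun a ha => hs_closed a ha) (fun a _ => hoo a)
      decide
    rw [Finset.sum_const, nsmul_eq_mul, mul_one] at hsum
    rw [even_iff_two_dvd]
    exact (ZMod.natCast_eq_zero_iff _ _).1 hsum
  have htodd : Odd t.card := by
    have hsum : s.card + t.card = V₁.card :=
      Finset.card_filter_add_card_filter_not (fun x => other x ∈ V₁)
    rcases Nat.even_or_odd t.card with h | h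
    · exfalso
      have : Even (s.card + t.card) := hseven.add h
      rw [hsum] at this
      exact (Nat.not_odd_iff_even.2 this) hodd
    · exact h
  have himg : ∀ x ∈ t, other x ∈ ({u₁, u₂, u₃} : Finset V) := by
    intro x hx
    rw [ht, Finset.mem_filter] at hx
    rcases hcover (other x) with h | h | h | h | h
    · exact absurd h hx.2
    · exact absurd h (hnotV₂ x hx.1)
    · simp [h]
    · simp [h]
    · simp [h]
  have hinjOn : Set.InjOn other ↑t := by
    intro x _ y _ hxy
    have := congrArg other hxy
    rwa [hoo, hoo] at this
  have hcard3 : ({u₁, u₂, u₃} : Finset V).card = 3 := by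
    rw [Finset.card_insert_of_notMem (by simp [h12, h13]),
      Finset.card_insert_of_notMem (by simp [h23]), Finset.card_singleton]
  have htle : t.card ≤ 3 := by
    have := Finset.card_le_card_of_injOn other himg hinjOn
    omega
  -- P y iff y is in the image of t under other
  have hPiff : ∀ y : V, y ∉ V₁ →
      ((∃ e ∈ M, G.connectsTo V₁ y e) ↔ ∃ x ∈ t, other x = y) := by
    intro y hy
    constructor
    · rintro ⟨e, he, hconn⟩
      rcases hconn with ⟨h1, h2⟩ | ⟨h1, h2⟩
      · -- fst ∈ V₁, snd = y
        refine ⟨G.fst e, ?_, ?_⟩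
        · rw [ht, Finset.mem_filter]
          refine ⟨h1, ?_⟩
          have he' : e = ex (G.fst e) := hun _ e he (Or.inl rfl)
          rcases hpair (G.fst e) with ⟨g1, g2⟩ | ⟨g1, g2⟩
          · rw [← he'] at g2; rw [← g2, h2]; exact hy
          · rw [← he'] at g1
            exact absurd (g1.symm.trans h2) (fun h => hy (h ▸ h1))
        · have he' : e = ex (G.fst e) := hun _ e he (Or.inl rfl)
          rcases hpair (G.fst e) with ⟨g1, g2⟩ | ⟨g1, g2⟩
          · rw [← he'] at g2; rw [← g2, h2]
          · rw [← he'] at g1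
            exact absurd (g1.symm.trans h2) (fun h => hy (h ▸ h1))
      · refine ⟨G.snd e, ?_, ?_⟩
        · rw [ht, Finset.mem_filter]
          refine ⟨h1, ?_⟩
          have he' : e = ex (G.snd e) := hun _ e he (Or.inr rfl)
          rcases hpair (G.snd e) with ⟨g1, g2⟩ | ⟨g1, g2⟩
          · rw [← he'] at g1
            exact absurd (g1.symm.trans h2) (fun h => hy (h ▸ h1))
          · rw [← he'] at g2; rw [← g2, h2]; exact hy
        · have he' : e = ex (G.snd e) := hun _ e he (Or.inr rfl)
          rcases hpair (G.snd e) with ⟨g1, g2⟩ | ⟨g1, g2⟩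
          · rw [← he'] at g1
            exact absurd (g1.symm.trans h2) (fun h => hy (h ▸ h1))
          · rw [← he'] at g2; rw [← g2, h2]
    · rintro ⟨x, hx, hxy⟩
      rw [ht, Finset.mem_filter] at hx
      refine ⟨ex x, hexM x, ?_⟩
      rcases hpair x with ⟨g1, g2⟩ | ⟨g1, g2⟩
      · exact Or.inl ⟨by rw [g1]; exact hx.1, g2.trans hxy⟩
      · exact Or.inr ⟨by rw [g1]; exact hx.1, g2.trans hxy⟩
  -- t.card = 1 or 3
  obtain ⟨k, hk⟩ := htodd
  have hcases : t.card = 1 ∨ t.card = 3 := by omega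
  rcases hcases with h1 | h3
  · -- exactly one
    obtain ⟨x₀, hx₀⟩ := Finset.card_eq_one.1 h1
    have hx₀t : x₀ ∈ t := by rw [hx₀]; exact Finset.mem_singleton_self x₀
    have himg₀ := himg x₀ hx₀t
    have hone : ∀ y : V, y ∉ V₁ →
        ((∃ e ∈ M, G.connectsTo V₁ y e) ↔ other x₀ = y) := by
      intro y hy
      rw [hPiff y hy]
      constructor
      · rintro ⟨x, hx, hxy⟩
        rw [hx₀, Finset.mem_singleton] at hx
        exact hx ▸ hxy
      · intro h; exact ⟨x₀, hx₀t, h⟩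
    simp only [Finset.mem_insert, Finset.mem_singleton] at himg₀
    rcases himg₀ with h | h | h
    · refine Or.inr (Or.inl ⟨(hone u₁ hu1.1).2 h, ?_, ?_⟩)
      · intro hP; exact h12 (h.symm.trans ((hone u₂ hu2.1).1 hP))
      · intro hP; exact h13 (h.symm.trans ((hone u₃ hu3.1).1 hP))
    · refine Or.inr (Or.inr (Or.inl ⟨?_, (hone u₂ hu2.1).2 h, ?_⟩))
      · intro hP; exact h12 (((hone u₁ hu1.1).1 hP).symm.trans h)
      · intro hP; exact h23 (h.symm.trans ((hone u₃ hu3.1).1 hP))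
    · refine Or.inr (Or.inr (Or.inr ⟨?_, ?_, (hone u₃ hu3.1).2 h⟩))
      · intro hP; exact h13 (((hone u₁ hu1.1).1 hP).symm.trans h)
      · intro hP; exact h23 (((hone u₂ hu2.1).1 hP).symm.trans h)
  · -- all three
    left
    have himgset : t.image other = ({u₁, u₂, u₃} : Finset V) := by
      refine Finset.eq_of_subset_of_card_le ?_ ?_
      · intro y hy
        obtain ⟨x, hx, hxy⟩ := Finset.mem_image.1 hy
        exact hxy ▸ himg x hx
      · rw [Finset.card_image_of_injOn hinjOn, h3, hcard3]
    have hmemP : ∀ y ∈ ({u₁, u₂, u₃} : Finset V), y ∉ V₁ →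
        ∃ e ∈ M, G.connectsTo V₁ y e := by
      intro y hy hyV₁
      rw [← himgset, Finset.mem_image] at hy
      exact (hPiff y hyV₁).2 hy
    exact ⟨hmemP u₁ (by simp) hu1.1, hmemP u₂ (by simp) hu2.1,
      hmemP u₃ (by simp) hu3.1⟩

/-- If all three cut vertices are matched into `V₁`, every matching edge lies
inside `V₁ ∪ {a,b,c}` or inside `V₂`. -/
lemma type_zero (a b c : V) (V₁ V₂ : Finset V)
    (haV₁ : a ∉ V₁) (hbV₁ : b ∉ V₁) (hcV₁ : c ∉ V₁)
    (hcover : ∀ x : V, x ∈ V₁ ∨ x ∈ V₂ ∨ x = a ∨ x = b ∨ x = c)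
    (hsep : ∀ e : G.E,
      ¬ (G.fst e ∈ V₁ ∧ G.snd e ∈ V₂) ∧ ¬ (G.fst e ∈ V₂ ∧ G.snd e ∈ V₁))
    (M : Finset G.E) (hM : G.IsPM M)
    (hPa : ∃ e ∈ M, G.connectsTo V₁ a e) (hPb : ∃ e ∈ M, G.connectsTo V₁ b e)
    (hPc : ∃ e ∈ M, G.connectsTo V₁ c e) :
    ∀ e ∈ M, G.bothIn (V₁ ∪ {a, b, c}) e ∨ G.bothIn V₂ e := by
  have key : ∀ e ∈ M, ∀ x y : V,
      ((G.fst e = x ∧ G.snd e = y) ∨ (G.fst e = y ∧ G.snd e = x)) →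
      x ∈ V₁ ∪ ({a, b, c} : Finset V) → y ∈ V₁ ∪ ({a, b, c} : Finset V) := by
    intro e he x y hxy hx
    rcases Finset.mem_union.1 hx with hx1 | hx1
    · -- x ∈ V₁
      rcases hcover y with h | h | h | h | h
      · exact Finset.mem_union_left _ h
      · exfalso
        rcases hxy with ⟨h1, h2⟩ | ⟨h1, h2⟩
        · exact (hsep e).1 ⟨by rw [h1]; exact hx1, by rw [h2]; exact h⟩
        · exact (hsep e).2 ⟨by rw [h1]; exact h, by rw [h2]; exact hx1⟩
      all_goals exact Finset.mem_union_right _ (by simp [h])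
    · -- x ∈ {a, b, c} : the other endpoint is in V₁
      simp only [Finset.mem_insert, Finset.mem_singleton] at hx1
      have hyV₁ : y ∈ V₁ := by
        rcases hx1 with h | h | h
        · exact G.endpt V₁ M hM a hPa haV₁ e he y (by subst h; exact hxy)
        · exact G.endpt V₁ M hM b hPb hbV₁ e he y (by subst h; exact hxy)
        · exact G.endpt V₁ M hM c hPc hcV₁ e he y (by subst h; exact hxy)
      exact Finset.mem_union_left _ hyV₁
  intro e he
  by_cases h1 : G.fst e ∈ V₁ ∪ ({a, b, c} : Finset V)
  · exact Or.inl ⟨h1, key e he (G.fst e) (G.snd e) (Or.inl ⟨rfl, rfl⟩) h1⟩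
  · have h2 : G.snd e ∉ V₁ ∪ ({a, b, c} : Finset V) := by
      intro h2
      exact h1 (key e he (G.snd e) (G.fst e) (Or.inr ⟨rfl, rfl⟩) h2)
    refine Or.inr ⟨?_, ?_⟩
    · rcases hcover (G.fst e) with h | h | h | h | h
      · exact absurd (Finset.mem_union_left _ h) h1
      · exact h
      all_goals exact absurd (Finset.mem_union_right _ (by simp [h])) h1
    · rcases hcover (G.snd e) with h | h | h | h | h
      · exact absurd (Finset.mem_union_left _ h) h2
      · exact h
      all_goals exact absurd (Finset.mem_union_right _ (by simp [h])) h2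

/-- If `a` is matched into `V₁` but `b`, `c` are not, every matching edge lies
inside `insert a V₁` or inside `V₂ ∪ {b,c}`. -/
lemma type_one (a b c : V) (V₁ V₂ : Finset V)
    (haV₁ : a ∉ V₁) (hbV₁ : b ∉ V₁) (hcV₁ : c ∉ V₁)
    (hcover : ∀ x : V, x ∈ V₁ ∨ x ∈ V₂ ∨ x = a ∨ x = b ∨ x = c)
    (hsep : ∀ e : G.E,
      ¬ (G.fst e ∈ V₁ ∧ G.snd e ∈ V₂) ∧ ¬ (G.fst e ∈ V₂ ∧ G.snd e ∈ V₁))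
    (M : Finset G.E) (hM : G.IsPM M)
    (hPa : ∃ e ∈ M, G.connectsTo V₁ a e)
    (hPb : ¬ ∃ e ∈ M, G.connectsTo V₁ b e)
    (hPc : ¬ ∃ e ∈ M, G.connectsTo V₁ c e) :
    ∀ e ∈ M, G.bothIn (insert a V₁) e ∨ G.bothIn (V₂ ∪ {b, c}) e := by
  have key : ∀ e ∈ M, ∀ x y : V,
      ((G.fst e = x ∧ G.snd e = y) ∨ (G.fst e = y ∧ G.snd e = x)) →
      x ∈ insert a V₁ → y ∈ insert a V₁ := by
    intro e he x y hxy hx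
    rcases Finset.mem_insert.1 hx with hx1 | hx1
    · -- x = a
      exact Finset.mem_insert_of_mem
        (G.endpt V₁ M hM a hPa haV₁ e he y (by subst hx1; exact hxy))
    · -- x ∈ V₁
      rcases hcover y with h | h | h | h | h
      · exact Finset.mem_insert_of_mem h
      · exfalso
        rcases hxy with ⟨h1, h2⟩ | ⟨h1, h2⟩
        · exact (hsep e).1 ⟨by rw [h1]; exact hx1, by rw [h2]; exact h⟩
        · exact (hsep e).2 ⟨by rw [h1]; exact h, by rw [h2]; exact hx1⟩
      · exact h ▸ Finset.mem_insert_self a V₁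
      · exfalso
        refine hPb ⟨e, he, ?_⟩
        rcases hxy with ⟨h1, h2⟩ | ⟨h1, h2⟩
        · exact Or.inl ⟨h1 ▸ hx1, h2.trans h⟩
        · exact Or.inr ⟨h2 ▸ hx1, h1.trans h⟩
      · exfalso
        refine hPc ⟨e, he, ?_⟩
        rcases hxy with ⟨h1, h2⟩ | ⟨h1, h2⟩
        · exact Or.inl ⟨h1 ▸ hx1, h2.trans h⟩
        · exact Or.inr ⟨h2 ▸ hx1, h1.trans h⟩
  intro e he
  by_cases h1 : G.fst e ∈ insert a V₁
  · exact Or.inl ⟨h1, key e he (G.fst e) (G.snd e) (Or.inl ⟨rfl, rfl⟩) h1⟩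
  · have h2 : G.snd e ∉ insert a V₁ := by
      intro h2
      exact h1 (key e he (G.snd e) (G.fst e) (Or.inr ⟨rfl, rfl⟩) h2)
    refine Or.inr ⟨?_, ?_⟩
    · rcases hcover (G.fst e) with h | h | h | h | h
      · exact absurd (Finset.mem_insert_of_mem h) h1
      · exact Finset.mem_union_left _ h
      · exact absurd (h ▸ Finset.mem_insert_self a V₁) h1
      all_goals exact Finset.mem_union_right _ (by simp [h])
    · rcases hcover (G.snd e) with h | h | h | h | h
      · exact absurd (Finset.mem_insert_of_mem h) h2
      · exact Finset.mem_union_left _ h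
      · exact absurd (h ▸ Finset.mem_insert_self a V₁) h2
      all_goals exact Finset.mem_union_right _ (by simp [h])

/-- A perfect matching splitting across `insert a V₁ | V₂ ∪ {b,c}` matches `a`
into `V₁`. -/
lemma witness_of_split (a b c : V) (V₁ V₂ : Finset V) (haV₂ : a ∉ V₂)
    (hab : a ≠ b) (hac : a ≠ c) (M : Finset G.E) (hM : G.IsPM M)
    (hsplit : ∀ e ∈ M, G.bothIn (insert a V₁) e ∨ G.bothIn (V₂ ∪ {b, c}) e) :
    ∃ e ∈ M, G.connectsTo V₁ a e := by
  obtain ⟨e, ⟨heM, hinc⟩, _⟩ := hM.2 a (Finset.mem_univ a)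
  refine ⟨e, heM, ?_⟩
  rcases hsplit e heM with ⟨hf, hs⟩ | ⟨hf, hs⟩
  · rcases hinc with h | h
    · right
      refine ⟨?_, h⟩
      rcases Finset.mem_insert.1 hs with h' | h'
      · exact absurd (h.trans h'.symm) (G.noLoop e)
      · exact h'
    · left
      refine ⟨?_, h⟩
      rcases Finset.mem_insert.1 hf with h' | h'
      · exact absurd (h'.trans h.symm) (G.noLoop e)
      · exact h'
  · exfalso
    rcases hinc with h | h
    · rw [h] at hf
      rcases Finset.mem_union.1 hf with h' | h'
      · exact haV₂ h'
      · rcases Finset.mem_insert.1 h' with h'' | h''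
        · exact hab h''
        · exact hac (Finset.mem_singleton.1 h'')
    · rw [h] at hs
      rcases Finset.mem_union.1 hs with h' | h'
      · exact haV₂ h'
      · rcases Finset.mem_insert.1 h' with h'' | h''
        · exact hab h''
        · exact hac (Finset.mem_singleton.1 h'')

/-- If all three cut vertices are matched into `V₁`, no matching edge lies
inside `{a,b,c}`. -/
lemma noS_of_witness (a b c : V) (V₁ : Finset V)
    (haV₁ : a ∉ V₁) (hbV₁ : b ∉ V₁) (hcV₁ : c ∉ V₁)
    (M : Finset G.E) (hM : G.IsPM M)
    (hPa : ∃ e ∈ M, G.connectsTo V₁ a e) (hPb : ∃ e ∈ M, G.connectsTo V₁ b e)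
    (hPc : ∃ e ∈ M, G.connectsTo V₁ c e) :
    ∀ e ∈ M, ¬ G.bothIn ({a, b, c} : Finset V) e := by
  intro e he hboth
  have hsV₁ : G.snd e ∈ V₁ := by
    have hf := hboth.1
    simp only [Finset.mem_insert, Finset.mem_singleton] at hf
    rcases hf with h | h | h
    · exact G.endpt V₁ M hM a hPa haV₁ e he (G.snd e) (Or.inl ⟨h, rfl⟩)
    · exact G.endpt V₁ M hM b hPb hbV₁ e he (G.snd e) (Or.inl ⟨h, rfl⟩)
    · exact G.endpt V₁ M hM c hPc hcV₁ e he (G.snd e) (Or.inl ⟨h, rfl⟩)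
  have hs := hboth.2
  simp only [Finset.mem_insert, Finset.mem_singleton] at hs
  rcases hs with h | h | h
  · exact haV₁ (h ▸ hsV₁)
  · exact hbV₁ (h ▸ hsV₁)
  · exact hcV₁ (h ▸ hsV₁)

/-- A perfect matching splitting across `V₁ ∪ {a,b,c} | V₂` with no edge
inside `{a,b,c}` matches each of `a,b,c` into `V₁`. -/
lemma witness0_of_noS (a b c : V) (V₁ V₂ : Finset V)
    (M : Finset G.E) (hM : G.IsPM M)
    (hsplit : ∀ e ∈ M, G.bothIn (V₁ ∪ {a, b, c}) e ∨ G.bothIn V₂ e)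
    (hg : ∀ e ∈ M, ¬ G.bothIn ({a, b, c} : Finset V) e)
    (j : V) (hj : j ∈ ({a, b, c} : Finset V)) (hjV₂ : j ∉ V₂) :
    ∃ e ∈ M, G.connectsTo V₁ j e := by
  obtain ⟨e, ⟨heM, hinc⟩, _⟩ := hM.2 j (Finset.mem_univ j)
  refine ⟨e, heM, ?_⟩
  rcases hsplit e heM with ⟨hf, hs⟩ | ⟨hf, hs⟩
  · rcases hinc with h | h
    · right
      refine ⟨?_, h⟩
      rcases Finset.mem_union.1 hs with h' | h'
      · exact h'
      · exact absurd ⟨h ▸ hj, h'⟩ (hg e heM)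
    · left
      refine ⟨?_, h⟩
      rcases Finset.mem_union.1 hf with h' | h'
      · exact h'
      · exact absurd ⟨h', h ▸ hj⟩ (hg e heM)
  · exfalso
    rcases hinc with h | h
    · exact hjV₂ (h ▸ hf)
    · exact hjV₂ (h ▸ hs)

end EMG

/-- Sums over filters of pointwise-equivalent predicates agree (regardless of
the `Decidable` instances involved). -/
lemma sum_filter_iff {α β : Type*} [Fintype α] [AddCommMonoid β]
    (p q : α → Prop) {instp : DecidablePred p} {instq : DecidablePred q}
    (h : ∀ a, p a ↔ q a) (f : α → β) :
    ∑ a ∈ @Finset.filter α p instp Finset.univ, f a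
      = ∑ a ∈ @Finset.filter α q instq Finset.univ, f a := by
  refine Finset.sum_congr ?_ (fun _ _ => rfl)
  ext a
  simp only [Finset.mem_filter, Finset.mem_univ, true_and]
  exact h a

set_option maxHeartbeats 1000000 in
/-- With a 3-cut `S = {u₁,u₂,u₃}` separating `V₁` (odd) from `V₂`, every
perfect matching of `G` is of exactly one of four types (all of `S` matched
into `V₁`, or exactly `uᵢ` matched into `V₁` for `i = 1,2,3`), and
consequently the weight of any vertex colouring decomposes as
`w(vc) = Σᵢ Wᵢ(vc)·Wᵢ'(vc)`. -/
theorem stmt15 {V : Type} [Fintype V] [DecidableEq V] (G : EMG V)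
    (u₁ u₂ u₃ : V) (h12 : u₁ ≠ u₂) (h13 : u₁ ≠ u₃) (h23 : u₂ ≠ u₃)
    (V₁ V₂ : Finset V)
    (h1ne : V₁.Nonempty)
    (hd12 : Disjoint V₁ V₂)
    (hu1 : u₁ ∉ V₁ ∧ u₁ ∉ V₂) (hu2 : u₂ ∉ V₁ ∧ u₂ ∉ V₂) (hu3 : u₃ ∉ V₁ ∧ u₃ ∉ V₂)
    (hcover : ∀ x : V, x ∈ V₁ ∨ x ∈ V₂ ∨ x = u₁ ∨ x = u₂ ∨ x = u₃)
    (hsep : ∀ e : G.E,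
      ¬ (G.fst e ∈ V₁ ∧ G.snd e ∈ V₂) ∧ ¬ (G.fst e ∈ V₂ ∧ G.snd e ∈ V₁))
    (hodd : Odd V₁.card) :
    (∀ M : Finset G.E, G.IsPM M →
      ∃! t : Fin 4,
        ![ (∀ e ∈ M, G.bothIn (V₁ ∪ {u₁, u₂, u₃}) e ∨ G.bothIn V₂ e) ∧
             (∀ j ∈ ({u₁, u₂, u₃} : Finset V), ∃ e ∈ M, G.connectsTo V₁ j e),
           (∀ e ∈ M, G.bothIn (insert u₁ V₁) e ∨ G.bothIn (V₂ ∪ {u₂, u₃}) e) ∧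
             (∃ e ∈ M, G.connectsTo V₁ u₁ e),
           (∀ e ∈ M, G.bothIn (insert u₂ V₁) e ∨ G.bothIn (V₂ ∪ {u₁, u₃}) e) ∧
             (∃ e ∈ M, G.connectsTo V₁ u₂ e),
           (∀ e ∈ M, G.bothIn (insert u₃ V₁) e ∨ G.bothIn (V₂ ∪ {u₁, u₂}) e) ∧
             (∃ e ∈ M, G.connectsTo V₁ u₃ e) ] t) ∧
    (∀ vc : V → ℕ,
      G.wcol vc =
        (∑ M ∈ Finset.univ.filter (fun M : Finset G.E =>
            G.IsPMOn (V₁ ∪ {u₁, u₂, u₃}) M ∧ G.Induces M vc ∧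
            ∀ e ∈ M, ¬ G.bothIn {u₁, u₂, u₃} e), ∏ e ∈ M, G.w e) *
          G.wcolOn V₂ vc
        + G.wcolOn (insert u₁ V₁) vc * G.wcolOn (V₂ ∪ {u₂, u₃}) vc
        + G.wcolOn (insert u₂ V₁) vc * G.wcolOn (V₂ ∪ {u₁, u₃}) vc
        + G.wcolOn (insert u₃ V₁) vc * G.wcolOn (V₂ ∪ {u₁, u₂}) vc) := by
  classical
  have hcover2 : ∀ x : V, x ∈ V₁ ∨ x ∈ V₂ ∨ x = u₂ ∨ x = u₁ ∨ x = u₃ := by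
    intro x; rcases hcover x with h | h | h | h | h <;> tauto
  have hcover3 : ∀ x : V, x ∈ V₁ ∨ x ∈ V₂ ∨ x = u₃ ∨ x = u₁ ∨ x = u₂ := by
    intro x; rcases hcover x with h | h | h | h | h <;> tauto
  have hV₁B : ∀ (b c : V), b ∉ V₁ → c ∉ V₁ →
      ∀ v ∈ V₁, v ∉ V₂ ∪ ({b, c} : Finset V) := by
    intro b c hb hc v hv h
    rcases Finset.mem_union.1 h with h | h
    · exact (Finset.disjoint_left.1 hd12 hv) h
    · rcases Finset.mem_insert.1 h with h | h
      · exact hb (h ▸ hv)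
      · exact hc ((Finset.mem_singleton.1 h) ▸ hv)
  have hclass : ∀ M : Finset G.E, G.IsPM M →
      ∃! t : Fin 4,
        ![ (∀ e ∈ M, G.bothIn (V₁ ∪ {u₁, u₂, u₃}) e ∨ G.bothIn V₂ e) ∧
             (∀ j ∈ ({u₁, u₂, u₃} : Finset V), ∃ e ∈ M, G.connectsTo V₁ j e),
           (∀ e ∈ M, G.bothIn (insert u₁ V₁) e ∨ G.bothIn (V₂ ∪ {u₂, u₃}) e) ∧
             (∃ e ∈ M, G.connectsTo V₁ u₁ e),
           (∀ e ∈ M, G.bothIn (insert u₂ V₁) e ∨ G.bothIn (V₂ ∪ {u₁, u₃}) e) ∧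
             (∃ e ∈ M, G.connectsTo V₁ u₂ e),
           (∀ e ∈ M, G.bothIn (insert u₃ V₁) e ∨ G.bothIn (V₂ ∪ {u₁, u₂}) e) ∧
             (∃ e ∈ M, G.connectsTo V₁ u₃ e) ] t := by
    intro M hM
    have hexcl1 : ∀ (a b c y : V), y ∉ V₁ → y ≠ a →
        (∀ v ∈ V₁, v ∉ V₂ ∪ ({b, c} : Finset V)) →
        (∃ e ∈ M, G.connectsTo V₁ y e) →
        (∀ e ∈ M, G.bothIn (insert a V₁) e ∨ G.bothIn (V₂ ∪ {b, c}) e) →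
        False := by
      rintro a b c y hyV₁ hya hB ⟨e, he, hconn⟩ hsplit
      exact G.excl V₁ (insert a V₁) (V₂ ∪ {b, c}) y
        (by simp [hya, hyV₁]) hB e hconn (hsplit e he)
    have hpar := G.parity u₁ u₂ u₃ h12 h13 h23 V₁ V₂ hd12 hu1 hu2 hu3 hcover
      hsep hodd M hM
    rcases hpar with ⟨hP1, hP2, hP3⟩ | ⟨hP1, hP2, hP3⟩ | ⟨hP1, hP2, hP3⟩ |
      ⟨hP1, hP2, hP3⟩
    · refine ⟨0, ⟨G.type_zero u₁ u₂ u₃ V₁ V₂ hu1.1 hu2.1 hu3.1 hcover hsep M hM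
        hP1 hP2 hP3, ?_⟩, ?_⟩
      · intro j hj
        simp only [Finset.mem_insert, Finset.mem_singleton] at hj
        rcases hj with rfl | rfl | rfl
        exacts [hP1, hP2, hP3]
      · intro t' ht'
        fin_cases t'
        · rfl
        · exact absurd (hexcl1 u₁ u₂ u₃ u₂ hu2.1 h12.symm
            (hV₁B u₂ u₃ hu2.1 hu3.1) hP2 ht'.1) not_false
        · exact absurd (hexcl1 u₂ u₁ u₃ u₁ hu1.1 h12
            (hV₁B u₁ u₃ hu1.1 hu3.1) hP1 ht'.1) not_false
        · exact absurd (hexcl1 u₃ u₁ u₂ u₁ hu1.1 h13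
            (hV₁B u₁ u₂ hu1.1 hu2.1) hP1 ht'.1) not_false
    · refine ⟨1, ⟨G.type_one u₁ u₂ u₃ V₁ V₂ hu1.1 hu2.1 hu3.1 hcover hsep M hM
        hP1 hP2 hP3, hP1⟩, ?_⟩
      intro t' ht'
      fin_cases t'
      · exact absurd (ht'.2 u₂ (by simp)) hP2
      · rfl
      · exact absurd ht'.2 hP2
      · exact absurd ht'.2 hP3
    · refine ⟨2, ⟨G.type_one u₂ u₁ u₃ V₁ V₂ hu2.1 hu1.1 hu3.1 hcover2 hsep M hM
        hP2 hP1 hP3, hP2⟩, ?_⟩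
      intro t' ht'
      fin_cases t'
      · exact absurd (ht'.2 u₁ (by simp)) hP1
      · exact absurd ht'.2 hP1
      · rfl
      · exact absurd ht'.2 hP3
    · refine ⟨3, ⟨G.type_one u₃ u₁ u₂ V₁ V₂ hu3.1 hu1.1 hu2.1 hcover3 hsep M hM
        hP3 hP1 hP2, hP3⟩, ?_⟩
      intro t' ht'
      fin_cases t'
      · exact absurd (ht'.2 u₁ (by simp)) hP1
      · exact absurd ht'.2 hP1
      · exact absurd ht'.2 hP2
      · rfl
  refine ⟨hclass, ?_⟩
  intro vc
  -- disjointness and covering facts for the four cuts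
  have hSd : Disjoint (V₁ ∪ ({u₁, u₂, u₃} : Finset V)) V₂ := by
    rw [Finset.disjoint_union_left]
    refine ⟨hd12, Finset.disjoint_left.2 ?_⟩
    intro a ha
    simp only [Finset.mem_insert, Finset.mem_singleton] at ha
    rcases ha with rfl | rfl | rfl
    exacts [hu1.2, hu2.2, hu3.2]
  have hU0 : ∀ x : V, x ∈ V₁ ∪ ({u₁, u₂, u₃} : Finset V) ∨ x ∈ V₂ := by
    intro x
    rcases hcover x with h | h | h | h | h
    · exact Or.inl (Finset.mem_union_left _ h)
    · exact Or.inr h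
    all_goals exact Or.inl (Finset.mem_union_right _ (by simp [h]))
  have hdi : ∀ (a b c : V), a ∉ V₂ → a ≠ b → a ≠ c → b ∉ V₁ → c ∉ V₁ →
      Disjoint (insert a V₁) (V₂ ∪ ({b, c} : Finset V)) := by
    intro a b c ha hab hac hb hc
    rw [Finset.disjoint_left]
    intro x hx h'
    rcases Finset.mem_insert.1 hx with rfl | hx1
    · rcases Finset.mem_union.1 h' with h | h
      · exact ha h
      · rcases Finset.mem_insert.1 h with h | h
        · exact hab h
        · exact hac (Finset.mem_singleton.1 h)
    · rcases Finset.mem_union.1 h' with h | h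
      · exact (Finset.disjoint_left.1 hd12 hx1) h
      · rcases Finset.mem_insert.1 h with h | h
        · exact hb (h ▸ hx1)
        · exact hc ((Finset.mem_singleton.1 h) ▸ hx1)
  have hUi : ∀ (a b c : V), (∀ x : V, x ∈ V₁ ∨ x ∈ V₂ ∨ x = a ∨ x = b ∨ x = c) →
      ∀ x : V, x ∈ insert a V₁ ∨ x ∈ V₂ ∪ ({b, c} : Finset V) := by
    intro a b c hcov x
    rcases hcov x with h | h | h | h | h
    · exact Or.inl (Finset.mem_insert_of_mem h)
    · exact Or.inr (Finset.mem_union_left _ h)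
    · exact Or.inl (h ▸ Finset.mem_insert_self a V₁)
    all_goals exact Or.inr (Finset.mem_union_right _ (by simp [h]))
  -- the four filter-predicate equivalences
  have iff0 : ∀ M : Finset G.E,
      ((G.IsPM M ∧ G.Induces M vc) ∧
        ((∀ e ∈ M, G.bothIn (V₁ ∪ {u₁, u₂, u₃}) e ∨ G.bothIn V₂ e) ∧
          (∀ j ∈ ({u₁, u₂, u₃} : Finset V), ∃ e ∈ M, G.connectsTo V₁ j e)))
      ↔ (G.IsPM M ∧ G.Induces M vc ∧
        (∀ e ∈ M, G.bothIn (V₁ ∪ {u₁, u₂, u₃}) e ∨ G.bothIn V₂ e) ∧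
        ∀ e ∈ M, ¬ G.bothIn ({u₁, u₂, u₃} : Finset V) e) := by
    intro M
    constructor
    · rintro ⟨⟨hPM, hInd⟩, hsp, hwit⟩
      exact ⟨hPM, hInd, hsp, G.noS_of_witness u₁ u₂ u₃ V₁ hu1.1 hu2.1 hu3.1 M
        hPM (hwit u₁ (by simp)) (hwit u₂ (by simp)) (hwit u₃ (by simp))⟩
    · rintro ⟨hPM, hInd, hsp, hg⟩
      refine ⟨⟨hPM, hInd⟩, hsp, ?_⟩
      intro j hj
      have hjV₂ : j ∉ V₂ := by
        simp only [Finset.mem_insert, Finset.mem_singleton] at hj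
        rcases hj with rfl | rfl | rfl
        exacts [hu1.2, hu2.2, hu3.2]
      exact G.witness0_of_noS u₁ u₂ u₃ V₁ V₂ M hPM hsp hg j hj hjV₂
  have iffi : ∀ (a b c : V), a ∉ V₂ → a ≠ b → a ≠ c → ∀ M : Finset G.E,
      ((G.IsPM M ∧ G.Induces M vc) ∧
        ((∀ e ∈ M, G.bothIn (insert a V₁) e ∨ G.bothIn (V₂ ∪ {b, c}) e) ∧
          (∃ e ∈ M, G.connectsTo V₁ a e)))
      ↔ (G.IsPM M ∧ G.Induces M vc ∧
        (∀ e ∈ M, G.bothIn (insert a V₁) e ∨ G.bothIn (V₂ ∪ {b, c}) e) ∧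
        ∀ e ∈ M, True) := by
    intro a b c ha hab hac M
    constructor
    · rintro ⟨⟨hPM, hInd⟩, hsp, _⟩
      exact ⟨hPM, hInd, hsp, fun _ _ => trivial⟩
    · rintro ⟨hPM, hInd, hsp, _⟩
      exact ⟨⟨hPM, hInd⟩, hsp,
        G.witness_of_split a b c V₁ V₂ ha hab hac M hPM hsp⟩
  have hg0 : ∀ e : G.E, G.bothIn V₂ e →
      ¬ G.bothIn ({u₁, u₂, u₃} : Finset V) e := by
    intro e he hb
    have hf := hb.1
    simp only [Finset.mem_insert, Finset.mem_singleton] at hf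
    rcases hf with h | h | h
    · exact hu1.2 (h ▸ he.1)
    · exact hu2.2 (h ▸ he.1)
    · exact hu3.2 (h ▸ he.1)
  -- assembling
  have hwcol : G.wcol vc = ∑ M ∈ Finset.univ.filter (fun M : Finset G.E =>
      G.IsPM M ∧ G.Induces M vc), ∏ e ∈ M, G.w e := rfl
  calc G.wcol vc
      = ∑ M ∈ Finset.univ.filter (fun M : Finset G.E =>
          G.IsPM M ∧ G.Induces M vc), ∏ e ∈ M, G.w e := hwcol
    _ = ∑ M ∈ Finset.univ.filter (fun M : Finset G.E =>
          G.IsPM M ∧ G.Induces M vc), ∑ t : Fin 4,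
          if ![ (∀ e ∈ M, G.bothIn (V₁ ∪ {u₁, u₂, u₃}) e ∨ G.bothIn V₂ e) ∧
             (∀ j ∈ ({u₁, u₂, u₃} : Finset V), ∃ e ∈ M, G.connectsTo V₁ j e),
           (∀ e ∈ M, G.bothIn (insert u₁ V₁) e ∨ G.bothIn (V₂ ∪ {u₂, u₃}) e) ∧
             (∃ e ∈ M, G.connectsTo V₁ u₁ e),
           (∀ e ∈ M, G.bothIn (insert u₂ V₁) e ∨ G.bothIn (V₂ ∪ {u₁, u₃}) e) ∧
             (∃ e ∈ M, G.connectsTo V₁ u₂ e),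
           (∀ e ∈ M, G.bothIn (insert u₃ V₁) e ∨ G.bothIn (V₂ ∪ {u₁, u₂}) e) ∧
             (∃ e ∈ M, G.connectsTo V₁ u₃ e) ] t then ∏ e ∈ M, G.w e else 0 := by
        refine Finset.sum_congr rfl ?_
        intro M hMm
        rw [Finset.mem_filter] at hMm
        obtain ⟨t, ht, huniq⟩ := hclass M hMm.2.1
        rw [Finset.sum_eq_single t]
        · rw [if_pos ht]
        · intro b _ hbt
          rw [if_neg (fun hb => hbt (huniq b hb))]
        · intro h; exact absurd (Finset.mem_univ t) h
    _ = ∑ t : Fin 4, ∑ M ∈ Finset.univ.filter (fun M : Finset G.E =>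
          G.IsPM M ∧ G.Induces M vc),
          if ![ (∀ e ∈ M, G.bothIn (V₁ ∪ {u₁, u₂, u₃}) e ∨ G.bothIn V₂ e) ∧
             (∀ j ∈ ({u₁, u₂, u₃} : Finset V), ∃ e ∈ M, G.connectsTo V₁ j e),
           (∀ e ∈ M, G.bothIn (insert u₁ V₁) e ∨ G.bothIn (V₂ ∪ {u₂, u₃}) e) ∧
             (∃ e ∈ M, G.connectsTo V₁ u₁ e),
           (∀ e ∈ M, G.bothIn (insert u₂ V₁) e ∨ G.bothIn (V₂ ∪ {u₁, u₃}) e) ∧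
             (∃ e ∈ M, G.connectsTo V₁ u₂ e),
           (∀ e ∈ M, G.bothIn (insert u₃ V₁) e ∨ G.bothIn (V₂ ∪ {u₁, u₂}) e) ∧
             (∃ e ∈ M, G.connectsTo V₁ u₃ e) ] t then ∏ e ∈ M, G.w e else 0 :=
        Finset.sum_comm
    _ = ∑ t : Fin 4, ∑ M ∈ Finset.univ.filter (fun M : Finset G.E =>
          (G.IsPM M ∧ G.Induces M vc) ∧
          ![ (∀ e ∈ M, G.bothIn (V₁ ∪ {u₁, u₂, u₃}) e ∨ G.bothIn V₂ e) ∧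
             (∀ j ∈ ({u₁, u₂, u₃} : Finset V), ∃ e ∈ M, G.connectsTo V₁ j e),
           (∀ e ∈ M, G.bothIn (insert u₁ V₁) e ∨ G.bothIn (V₂ ∪ {u₂, u₃}) e) ∧
             (∃ e ∈ M, G.connectsTo V₁ u₁ e),
           (∀ e ∈ M, G.bothIn (insert u₂ V₁) e ∨ G.bothIn (V₂ ∪ {u₁, u₃}) e) ∧
             (∃ e ∈ M, G.connectsTo V₁ u₂ e),
           (∀ e ∈ M, G.bothIn (insert u₃ V₁) e ∨ G.bothIn (V₂ ∪ {u₁, u₂}) e) ∧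
             (∃ e ∈ M, G.connectsTo V₁ u₃ e) ] t), ∏ e ∈ M, G.w e := by
        refine Finset.sum_congr rfl ?_
        intro t _
        rw [← Finset.sum_filter, Finset.filter_filter]
    _ = (∑ M ∈ Finset.univ.filter (fun M : Finset G.E =>
            G.IsPMOn (V₁ ∪ {u₁, u₂, u₃}) M ∧ G.Induces M vc ∧
            ∀ e ∈ M, ¬ G.bothIn {u₁, u₂, u₃} e), ∏ e ∈ M, G.w e) *
          G.wcolOn V₂ vc
        + G.wcolOn (insert u₁ V₁) vc * G.wcolOn (V₂ ∪ {u₂, u₃}) vc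
        + G.wcolOn (insert u₂ V₁) vc * G.wcolOn (V₂ ∪ {u₁, u₃}) vc
        + G.wcolOn (insert u₃ V₁) vc * G.wcolOn (V₂ ∪ {u₁, u₂}) vc := by
        rw [Fin.sum_univ_four]
        have hi : ∀ (a b c : V) (hd : Disjoint (insert a V₁) (V₂ ∪ ({b, c} : Finset V)))
            (hu : ∀ x : V, x ∈ insert a V₁ ∨ x ∈ V₂ ∪ ({b, c} : Finset V))
            (p : Finset G.E → Prop) [DecidablePred p]
            (hp : ∀ M : Finset G.E, p M ↔
              ((G.IsPM M ∧ G.Induces M vc) ∧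
                ((∀ e ∈ M, G.bothIn (insert a V₁) e ∨ G.bothIn (V₂ ∪ {b, c}) e) ∧
                  (∃ e ∈ M, G.connectsTo V₁ a e))))
            (hiffi : ∀ M : Finset G.E,
              ((G.IsPM M ∧ G.Induces M vc) ∧
                ((∀ e ∈ M, G.bothIn (insert a V₁) e ∨ G.bothIn (V₂ ∪ {b, c}) e) ∧
                  (∃ e ∈ M, G.connectsTo V₁ a e)))
              ↔ (G.IsPM M ∧ G.Induces M vc ∧
                (∀ e ∈ M, G.bothIn (insert a V₁) e ∨ G.bothIn (V₂ ∪ {b, c}) e) ∧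
                ∀ e ∈ M, True)),
            (∑ M ∈ Finset.univ.filter p, ∏ e ∈ M, G.w e)
              = G.wcolOn (insert a V₁) vc * G.wcolOn (V₂ ∪ {b, c}) vc := by
          intro a b c hd hu p _ hp hiffi
          refine Eq.trans (sum_filter_iff _ _ ?_ _)
            (Eq.trans (G.factor_lemma (insert a V₁) (V₂ ∪ {b, c}) hd hu
              (fun _ => True) (fun _ _ => trivial) vc)
              (congrArg₂ (· * ·) (Eq.trans (sum_filter_iff _ _ ?_ _) rfl)
                (Eq.trans (sum_filter_iff _ _ ?_ _) rfl)))
          · exact fun M => (hp M).trans (hiffi M)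
          · intro M
            constructor
            · rintro ⟨h1, h2, _⟩; exact ⟨h1, h2⟩
            · rintro ⟨h1, h2⟩; exact ⟨h1, h2, fun _ _ => trivial⟩
          · exact fun _ => Iff.rfl
        refine congrArg₂ (· + ·) (congrArg₂ (· + ·) (congrArg₂ (· + ·) ?_ ?_) ?_) ?_
        · refine Eq.trans (sum_filter_iff _ _ ?_ _)
            (Eq.trans (G.factor_lemma (V₁ ∪ {u₁, u₂, u₃}) V₂ hSd hU0
              (fun e => ¬ G.bothIn ({u₁, u₂, u₃} : Finset V) e) hg0 vc)
              (congrArg₂ (· * ·) (sum_filter_iff _ _ ?_ _)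
                (Eq.trans (sum_filter_iff _ _ ?_ _) rfl)))
          · exact fun M => iff0 M
          · exact fun _ => Iff.rfl
          · exact fun _ => Iff.rfl
        · exact hi u₁ u₂ u₃ (hdi u₁ u₂ u₃ hu1.2 h12 h13 hu2.1 hu3.1)
            (hUi u₁ u₂ u₃ hcover) _ (fun _ => Iff.rfl)
            (iffi u₁ u₂ u₃ hu1.2 h12 h13)
        · exact hi u₂ u₁ u₃ (hdi u₂ u₁ u₃ hu2.2 h12.symm h23 hu1.1 hu3.1)
            (hUi u₂ u₁ u₃ hcover2) _ (fun _ => Iff.rfl)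
            (iffi u₂ u₁ u₃ hu2.2 h12.symm h23)
        · exact hi u₃ u₁ u₂ (hdi u₃ u₁ u₂ hu3.2 h13.symm h23.symm hu1.1 hu2.1)
            (hUi u₃ u₁ u₂ hcover3) _ (fun _ => Iff.rfl)
            (iffi u₃ u₁ u₂ hu3.2 h13.symm h23.symm)
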